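/- For any n ≥ 30, every graph G on n vertices with minimum degree δ(G) ≥ ⌊n/2⌋ + 1 has a percolating set of size 3 in 3-neighbour bootstrap percolation: m(G, 3) = 3. -/

import Mathlib

open Finset

open scoped Classical

noncomputable section

variable {V : Type*}

/-- Number of neighbours of `v` inside the set `A`. -/
def nbrsIn (G : SimpleGraph V) (A : Finset V) (v : V) : ℕ :=
  (A.filter (fun u => G.Adj v u)).card

/-- One step of the `r`-neighbour bootstrap process. -/
def bootStep [Fintype V] (G : SimpleGraph V) (r : ℕ) (A : Finset V) : Finset V :=
  A ∪ Finset.univ.filter (fun v => r ≤ nbrsIn G A v)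

/-- The sets `A_t` of the `r`-neighbour bootstrap process started at `A`. -/
def bootSeq [Fintype V] (G : SimpleGraph V) (r : ℕ) (A : Finset V) : ℕ → Finset V
  | 0 => A
  | t + 1 => bootStep G r (bootSeq G r A t)

/-- `A` is closed under the `r`-neighbour bootstrap rule. -/
def BootClosed (G : SimpleGraph V) (r : ℕ) (A : Finset V) : Prop :=
  ∀ v, r ≤ nbrsIn G A v → v ∈ A

/-- The `r`-neighbour bootstrap closure `⟨A⟩_r`: the smallest closed superset of `A`. -/
def bootClosure [Fintype V] (G : SimpleGraph V) (r : ℕ) (A : Finset V) : Finset V :=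
  Finset.univ.filter (fun v => ∀ B : Finset V, A ⊆ B → BootClosed G r B → v ∈ B)

/-- `m(G, r)`: the minimum size of a percolating set. -/
def minPerc [Fintype V] (G : SimpleGraph V) (r : ℕ) : ℕ :=
  sInf {k | ∃ A : Finset V, A.card = k ∧ bootClosure G r A = Finset.univ}

end

set_option linter.unusedSectionVars false

section Aux

variable {V : Type*} [Fintype V] {G : SimpleGraph V}

lemma nbrsIn_mono {S T : Finset V} (h : S ⊆ T) (v : V) : nbrsIn G S v ≤ nbrsIn G T v :=
  Finset.card_le_card (Finset.filter_subset_filter _ h)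

lemma nbrsIn_le_card (S : Finset V) (v : V) : nbrsIn G S v ≤ S.card :=
  Finset.card_le_card (Finset.filter_subset _ _)

lemma nbrsIn_le_card_erase {S : Finset V} {v : V} (hv : v ∈ S) :
    nbrsIn G S v ≤ S.card - 1 := by
  have h : S.filter (fun u => G.Adj v u) ⊆ S.erase v := by
    intro u hu
    simp only [mem_filter] at hu
    exact Finset.mem_erase.2 ⟨fun he => G.irrefl (he ▸ hu.2), hu.1⟩
  calc nbrsIn G S v ≤ (S.erase v).card := Finset.card_le_card h
    _ = S.card - 1 := Finset.card_erase_of_mem hv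

lemma nbrsIn_add_compl (S : Finset V) (v : V) :
    nbrsIn G S v + nbrsIn G Sᶜ v = G.degree v := by
  unfold nbrsIn
  rw [← Finset.card_union_of_disjoint]
  · rw [← Finset.filter_union, Finset.union_compl, ← SimpleGraph.neighborFinset_eq_filter]
    rfl
  · exact Finset.disjoint_filter_filter disjoint_compl_right

lemma nbrsIn_insert (S : Finset V) (x v : V) (hx : x ∉ S) :
    nbrsIn G (insert x S) v = nbrsIn G S v + (if G.Adj v x then 1 else 0) := by
  unfold nbrsIn
  rw [Finset.filter_insert]
  split_ifs with h
  · rw [Finset.card_insert_of_notMem (fun hc => hx (Finset.mem_filter.1 hc).1)]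
  · simp

lemma sum_nbrsIn_comm (S T : Finset V) :
    ∑ a ∈ S, nbrsIn G T a = ∑ b ∈ T, nbrsIn G S b := by
  unfold nbrsIn
  simp only [Finset.card_filter]
  rw [Finset.sum_comm]
  congr 1; ext a; congr 1; ext b
  simp [G.adj_comm]

lemma subset_bootClosure (A : Finset V) : A ⊆ bootClosure G 3 A := by
  intro v hv
  simp only [bootClosure, Finset.mem_filter, Finset.mem_univ, true_and]
  exact fun B hAB _ => hAB hv

lemma bootClosure_subset {A B : Finset V} (hAB : A ⊆ B) (hB : BootClosed G 3 B) :
    bootClosure G 3 A ⊆ B := by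
  intro v hv
  simp only [bootClosure, Finset.mem_filter, Finset.mem_univ, true_and] at hv
  exact hv B hAB hB

lemma bootClosed_bootClosure (A : Finset V) : BootClosed G 3 (bootClosure G 3 A) := by
  intro v hv
  simp only [bootClosure, Finset.mem_filter, Finset.mem_univ, true_and]
  intro B hAB hB
  exact hB v (le_trans hv (nbrsIn_mono (bootClosure_subset hAB hB) v))

lemma three_nbrs {C : Finset V} {v p q w : V} (hp : p ∈ C) (hq : q ∈ C) (hw : w ∈ C)
    (hpq : p ≠ q) (hpw : p ≠ w) (hqw : q ≠ w)
    (ap : G.Adj v p) (aq : G.Adj v q) (aw : G.Adj v w) : 3 ≤ nbrsIn G C v := by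
  have h : ({p, q, w} : Finset V) ⊆ C.filter (fun u => G.Adj v u) := by
    intro u hu
    simp only [Finset.mem_insert, Finset.mem_singleton] at hu
    rcases hu with rfl | rfl | rfl <;> exact Finset.mem_filter.2 ⟨by assumption, by assumption⟩
  calc (3 : ℕ) = ({p, q, w} : Finset V).card := by
        rw [Finset.card_insert_of_notMem (by simp [hpq, hpw]),
          Finset.card_insert_of_notMem (by simp [hqw]), Finset.card_singleton]
    _ ≤ _ := Finset.card_le_card h

lemma mem_closure_three {A C : Finset V} (hC : C = bootClosure G 3 A) {v p q w : V}
    (hp : p ∈ C) (hq : q ∈ C) (hw : w ∈ C)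
    (hpq : p ≠ q) (hpw : p ≠ w) (hqw : q ≠ w)
    (ap : G.Adj v p) (aq : G.Adj v q) (aw : G.Adj v w) : v ∈ C := by
  subst hC
  exact bootClosed_bootClosure A v (three_nbrs hp hq hw hpq hpw hqw ap aq aw)

end Aux

section Aux2

variable {V : Type*} [Fintype V] {G : SimpleGraph V}

lemma nbrsIn_univ (v : V) : nbrsIn G Finset.univ v = G.degree v := by
  have h := nbrsIn_add_compl (G := G) (Finset.univ : Finset V) v
  simpa [nbrsIn] using h

lemma closed_out_le_two {C : Finset V} (hC : BootClosed G 3 C) {v : V} (hv : v ∉ C) :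
    nbrsIn G C v ≤ 2 := by
  by_contra h
  exact hv (hC v (by omega))

lemma compl_card_ge {C : Finset V} {d : ℕ} (hC : BootClosed G 3 C) (hCne : C ≠ Finset.univ)
    (hδ : d + 1 ≤ G.minDegree) : d ≤ Cᶜ.card := by
  obtain ⟨v, hvC⟩ : ∃ v, v ∉ C := by
    by_contra h
    push_neg at h
    exact hCne (Finset.eq_univ_iff_forall.2 h)
  have hv : v ∈ Cᶜ := Finset.mem_compl.2 hvC
  have h1 : nbrsIn G C v ≤ 2 := closed_out_le_two hC hvC
  have h2 : nbrsIn G Cᶜ v ≤ Cᶜ.card - 1 := nbrsIn_le_card_erase hv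
  have h3 : d + 1 ≤ G.degree v := le_trans hδ (G.minDegree_le_degree v)
  have h4 := nbrsIn_add_compl (G := G) C v
  have h5 : 1 ≤ Cᶜ.card := Finset.card_pos.2 ⟨v, hv⟩
  omega

lemma closed_card_gap {C : Finset V} {n d : ℕ} (hC : BootClosed G 3 C)
    (hnV : Fintype.card V = n) (hd1 : 2 * d ≤ n) (hd2 : n ≤ 2 * d + 1) (hd15 : 15 ≤ d)
    (hδ : d + 1 ≤ G.minDegree) : C.card ≤ 4 ∨ d ≤ C.card := by
  set k := C.card with hk
  have hkn : k ≤ n := hnV ▸ Finset.card_le_univ C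
  have hcompl : Cᶜ.card = n - k := by rw [Finset.card_compl, hnV]
  have key : (d + 1) * k ≤ k * (k - 1) + 2 * (n - k) := by
    have e1 : ∑ a ∈ C, G.degree a = ∑ v : V, nbrsIn G C v := by
      calc ∑ a ∈ C, G.degree a = ∑ a ∈ C, nbrsIn G Finset.univ a := by
            simp [nbrsIn_univ]
        _ = ∑ v ∈ Finset.univ, nbrsIn G C v := sum_nbrsIn_comm C Finset.univ
    have e2 : ∑ v : V, nbrsIn G C v = ∑ v ∈ C, nbrsIn G C v + ∑ v ∈ Cᶜ, nbrsIn G C v :=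
      (Finset.sum_add_sum_compl C _).symm
    have e3 : ∑ v ∈ C, nbrsIn G C v ≤ k * (k - 1) := by
      calc ∑ v ∈ C, nbrsIn G C v ≤ ∑ _v ∈ C, (k - 1) :=
            Finset.sum_le_sum (fun v hv => nbrsIn_le_card_erase hv)
        _ = k * (k - 1) := by rw [Finset.sum_const, smul_eq_mul]
    have e4 : ∑ v ∈ Cᶜ, nbrsIn G C v ≤ 2 * (n - k) := by
      calc ∑ v ∈ Cᶜ, nbrsIn G C v ≤ ∑ _v ∈ Cᶜ, 2 :=
            Finset.sum_le_sum (fun v hv => closed_out_le_two hC (Finset.mem_compl.1 hv))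
        _ = 2 * (n - k) := by rw [Finset.sum_const, smul_eq_mul, hcompl, Nat.mul_comm]
    have e5 : (d + 1) * k ≤ ∑ a ∈ C, G.degree a := by
      calc (d + 1) * k = ∑ _a ∈ C, (d + 1) := by rw [Finset.sum_const, smul_eq_mul, Nat.mul_comm]
        _ ≤ ∑ a ∈ C, G.degree a :=
            Finset.sum_le_sum (fun a _ => le_trans hδ (G.minDegree_le_degree a))
    omega
  by_contra hcon
  push_neg at hcon
  obtain ⟨h5, hkd⟩ := hcon
  have h5' : 5 ≤ k := by omega
  have hkd' : k ≤ d - 1 := by omega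
  zify [show 1 ≤ k by omega, hkn] at key
  have c1 : (5 : ℤ) ≤ (k : ℤ) := by exact_mod_cast h5'
  have c2 : (k : ℤ) ≤ (d : ℤ) - 1 := by
    have : (k : ℤ) ≤ ((d - 1 : ℕ) : ℤ) := by exact_mod_cast hkd'
    omega
  have c3 : (15 : ℤ) ≤ (d : ℤ) := by exact_mod_cast hd15
  have c4 : (n : ℤ) ≤ 2 * (d : ℤ) + 1 := by exact_mod_cast hd2
  nlinarith [mul_nonneg (by omega : (0:ℤ) ≤ (k:ℤ) - 5) (by omega : (0:ℤ) ≤ (d:ℤ) - 1 - (k:ℤ))]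

end Aux2
section Aux3

variable {V : Type*} [Fintype V] {G : SimpleGraph V}

lemma aux_fill {Y : Finset V} {d : ℕ} (hd15 : 15 ≤ d)
    (hYlo : d ≤ Y.card) (hYhi : Y.card ≤ d + 1)
    (hnear : ∀ y ∈ Y, d - 1 ≤ nbrsIn G Y y)
    {x : V} (hx : x ∉ Y) (hx2 : 2 ≤ nbrsIn G Y x) :
    ∃ T : Finset V, T.card = 3 ∧ x ∈ T ∧ insert x Y ⊆ bootClosure G 3 T := by
  classical
  obtain ⟨y1, hy1, c, hc, hy1c⟩ := Finset.one_lt_card.1 (by unfold nbrsIn at hx2; omega : 1 < (Y.filter (fun u => G.Adj x u)).card)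
  simp only [Finset.mem_filter] at hy1 hc
  set F1 := Y.filter (fun u => G.Adj y1 u) with hF1
  set F2 := Y.filter (fun u => G.Adj c u) with hF2
  have hF1c : d - 1 ≤ F1.card := hnear y1 hy1.1
  have hF2c : d - 1 ≤ F2.card := hnear c hc.1
  have hunion : (F1 ∪ F2).card ≤ Y.card := by
    apply Finset.card_le_card
    intro u hu
    rcases Finset.mem_union.1 hu with h | h
    · exact (Finset.mem_filter.1 h).1
    · exact (Finset.mem_filter.1 h).1
  have hinter : d - 3 ≤ (F1 ∩ F2).card := by
    have := Finset.card_union_add_card_inter F1 F2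
    omega
  set W0 := (F1 ∩ F2) \ {y1, c} with hW0
  have hW0c : 2 ≤ W0.card := by
    have h1 : (F1 ∩ F2).card ≤ W0.card + ({y1, c} : Finset V).card :=
      Finset.card_le_card_sdiff_add_card
    have h2 : ({y1, c} : Finset V).card ≤ 2 := Finset.card_insert_le _ _ |>.trans (by simp)
    omega
  obtain ⟨y2, hy2, y3, hy3, hy23⟩ := Finset.one_lt_card.1 (by omega : 1 < W0.card)
  have hy2' := Finset.mem_sdiff.1 hy2
  have hy3' := Finset.mem_sdiff.1 hy3
  have hy2F1 : G.Adj y1 y2 := (Finset.mem_filter.1 (Finset.mem_inter.1 hy2'.1).1).2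
  have hy2F2 : G.Adj c y2 := (Finset.mem_filter.1 (Finset.mem_inter.1 hy2'.1).2).2
  have hy3F1 : G.Adj y1 y3 := (Finset.mem_filter.1 (Finset.mem_inter.1 hy3'.1).1).2
  have hy3F2 : G.Adj c y3 := (Finset.mem_filter.1 (Finset.mem_inter.1 hy3'.1).2).2
  have hy2Y : y2 ∈ Y := (Finset.mem_filter.1 (Finset.mem_inter.1 hy2'.1).1).1
  have hy3Y : y3 ∈ Y := (Finset.mem_filter.1 (Finset.mem_inter.1 hy3'.1).1).1
  have hy2ne : y2 ≠ y1 ∧ y2 ≠ c := by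
    constructor <;> (intro h; exact hy2'.2 (by simp [h]))
  have hy3ne : y3 ≠ y1 ∧ y3 ≠ c := by
    constructor <;> (intro h; exact hy3'.2 (by simp [h]))
  refine ⟨{x, y2, y3}, ?_, by simp, ?_⟩
  · rw [Finset.card_insert_of_notMem (by
        simp only [Finset.mem_insert, Finset.mem_singleton]
        push_neg
        exact ⟨fun h => hx (h ▸ hy2Y), fun h => hx (h ▸ hy3Y)⟩),
      Finset.card_insert_of_notMem (by simpa using hy23), Finset.card_singleton]
  set C := bootClosure G 3 ({x, y2, y3} : Finset V) with hC
  have hsub : ({x, y2, y3} : Finset V) ⊆ C := subset_bootClosure _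
  have hxC : x ∈ C := hsub (by simp)
  have hy2C : y2 ∈ C := hsub (by simp)
  have hy3C : y3 ∈ C := hsub (by simp)
  have hxny2 : x ≠ y2 := fun h => hx (h ▸ hy2Y)
  have hxny3 : x ≠ y3 := fun h => hx (h ▸ hy3Y)
  have hy1C : y1 ∈ C := mem_closure_three hC hxC hy2C hy3C hxny2 hxny3 hy23
    (G.adj_symm hy1.2) hy2F1 hy3F1
  have hcC : c ∈ C := mem_closure_three hC hxC hy2C hy3C hxny2 hxny3 hy23
    (G.adj_symm hc.2) hy2F2 hy3F2
  -- the four infected vertices of Y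
  set W : Finset V := {y1, c, y2, y3} with hW
  have hWcard : W.card = 4 := by
    rw [hW]
    rw [Finset.card_insert_of_notMem (by
        simp only [Finset.mem_insert, Finset.mem_singleton]
        push_neg
        exact ⟨hy1c, fun h => hy2ne.1 h.symm, fun h => hy3ne.1 h.symm⟩),
      Finset.card_insert_of_notMem (by
        simp only [Finset.mem_insert, Finset.mem_singleton]
        push_neg
        exact ⟨fun h => hy2ne.2 h.symm, fun h => hy3ne.2 h.symm⟩),
      Finset.card_insert_of_notMem (by simpa using hy23), Finset.card_singleton]
  have hWY : W ⊆ Y := by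
    intro u hu
    simp only [hW, Finset.mem_insert, Finset.mem_singleton] at hu
    rcases hu with rfl | rfl | rfl | rfl
    · exact hy1.1
    · exact hc.1
    · exact hy2Y
    · exact hy3Y
  have hWC : W ⊆ C := by
    intro u hu
    simp only [hW, Finset.mem_insert, Finset.mem_singleton] at hu
    rcases hu with rfl | rfl | rfl | rfl <;> assumption
  have hYC : ∀ z ∈ Y, z ∈ C := by
    intro z hz
    by_cases hzW : z ∈ W
    · exact hWC hzW
    · -- z is adjacent to at least 3 vertices of W
      have hWz : W ⊆ Y.erase z := fun u hu =>
        Finset.mem_erase.2 ⟨fun h => hzW (h ▸ hu), hWY hu⟩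
      have hfilsub : Y.filter (fun u => G.Adj z u) ⊆ Y.erase z := by
        intro u hu
        have hu' := Finset.mem_filter.1 hu
        exact Finset.mem_erase.2 ⟨fun h => G.irrefl (h ▸ hu'.2), hu'.1⟩
      have hbad : ((Y.erase z) \ (Y.filter (fun u => G.Adj z u))).card ≤ 1 := by
        rw [Finset.card_sdiff_of_subset hfilsub, Finset.card_erase_of_mem hz]
        have := hnear z hz
        unfold nbrsIn at this
        omega
      have hWn : (W.filter (fun u => ¬ G.Adj z u)).card ≤ 1 := by
        refine le_trans (Finset.card_le_card ?_) hbad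
        intro u hu
        have hu' := Finset.mem_filter.1 hu
        exact Finset.mem_sdiff.2 ⟨hWz hu'.1, fun h => hu'.2 (Finset.mem_filter.1 h).2⟩
      have hWf : 3 ≤ (W.filter (fun u => G.Adj z u)).card := by
        have := Finset.card_filter_add_card_filter_not
          (s := W) (p := fun u => G.Adj z u)
        omega
      have h3 : 3 ≤ nbrsIn G C z := by
        refine le_trans hWf (Finset.card_le_card ?_)
        intro u hu
        have hu' := Finset.mem_filter.1 hu
        exact Finset.mem_filter.2 ⟨hWC hu'.1, hu'.2⟩
      exact bootClosed_bootClosure _ z h3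
  intro v hv
  rcases Finset.mem_insert.1 hv with rfl | hvY
  · exact hxC
  · exact hYC v hvY

end Aux3
section Aux4

variable {V : Type*} [Fintype V] {G : SimpleGraph V}

lemma aux_P {Y : Finset V} {n d : ℕ} (hnV : Fintype.card V = n)
    (hd1 : 2 * d ≤ n) (hd2 : n ≤ 2 * d + 1) (hd15 : 15 ≤ d) (hδ : d + 1 ≤ G.minDegree)
    (hYlo : d ≤ Y.card) (hYhi : Y.card + d ≤ n)
    (hYout : ∀ y ∈ Y, nbrsIn G Yᶜ y ≤ 2) :
    ∃ T : Finset V, T.card = 3 ∧ bootClosure G 3 T = Finset.univ := by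
  classical
  by_contra hno
  push_neg at hno
  set m := Y.card with hm
  have hYcompl : Yᶜ.card = n - m := by rw [Finset.card_compl, hnV]
  have hdeg : ∀ v : V, d + 1 ≤ G.degree v := fun v => le_trans hδ (G.minDegree_le_degree v)
  have hnear : ∀ y ∈ Y, d - 1 ≤ nbrsIn G Y y := by
    intro y hy
    have h1 := nbrsIn_add_compl (G := G) Y y
    have h2 := hYout y hy
    have h3 := hdeg y
    omega
  -- find a starting vertex x outside Y with at least 2 neighbours in Y
  have hex : ∃ x, x ∉ Y ∧ 2 ≤ nbrsIn G Y x := by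
    have hYcne : Yᶜ.Nonempty := by
      rw [← Finset.card_pos]
      omega
    by_cases hcase : n - m ≤ d
    · obtain ⟨v, hv⟩ := hYcne
      refine ⟨v, Finset.mem_compl.1 hv, ?_⟩
      have h1 := nbrsIn_add_compl (G := G) Y v
      have h2 : nbrsIn G Yᶜ v ≤ n - m - 1 := by
        have := nbrsIn_le_card_erase (G := G) hv
        omega
      have h3 := hdeg v
      omega
    · have hnm : n - m = d + 1 := by omega
      by_contra hcon
      push_neg at hcon
      have hup : ∑ v ∈ Yᶜ, nbrsIn G Y v ≤ d + 1 := by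
        calc ∑ v ∈ Yᶜ, nbrsIn G Y v ≤ ∑ _v ∈ Yᶜ, 1 := by
              refine Finset.sum_le_sum (fun v hv => ?_)
              have := hcon v (Finset.mem_compl.1 hv)
              omega
          _ = d + 1 := by rw [Finset.sum_const, smul_eq_mul, hYcompl, hnm, mul_one]
      have hlow : 2 * d ≤ ∑ y ∈ Y, nbrsIn G Yᶜ y := by
        calc (2 * d : ℕ) ≤ ∑ _y ∈ Y, 2 := by rw [Finset.sum_const, smul_eq_mul]; omega
          _ ≤ ∑ y ∈ Y, nbrsIn G Yᶜ y := by
              refine Finset.sum_le_sum (fun y hy => ?_)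
              have h1 := nbrsIn_add_compl (G := G) Y y
              have h2 : nbrsIn G Y y ≤ m - 1 := nbrsIn_le_card_erase hy
              have h3 := hdeg y
              omega
      rw [sum_nbrsIn_comm] at hlow
      omega
  obtain ⟨x, hxY, hx2⟩ := hex
  obtain ⟨T1, hT1card, hxT1, hT1sub⟩ :=
    aux_fill hd15 hYlo (by omega) hnear hxY hx2
  set C1 := bootClosure G 3 T1 with hC1
  have hC1ne : C1 ≠ Finset.univ := hno T1 hT1card
  have hC1closed : BootClosed G 3 C1 := bootClosed_bootClosure T1
  have hC1le : C1.card + d ≤ n := by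
    have h1 := compl_card_ge hC1closed hC1ne hδ
    have h2 := Finset.card_compl (s := C1)
    have h3 := Finset.card_le_univ C1
    omega
  have hinscard : (insert x Y).card = m + 1 := Finset.card_insert_of_notMem hxY
  have hC1ge : m + 1 ≤ C1.card := hinscard ▸ Finset.card_le_card hT1sub
  have hn' : n = 2 * d + 1 := by omega
  have hmd : m = d := by omega
  have hC1card : C1.card = d + 1 := by omega
  have hC1eq : C1 = insert x Y :=
    (Finset.eq_of_subset_of_card_le hT1sub (by omega)).symm
  -- Y is a clique
  have hYclq : ∀ y ∈ Y, ∀ z ∈ Y, z ≠ y → G.Adj y z := by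
    intro y hy
    have hfs : Y.filter (fun u => G.Adj y u) ⊆ Y.erase y := by
      intro u hu
      have hu' := Finset.mem_filter.1 hu
      exact Finset.mem_erase.2 ⟨fun h => G.irrefl (h ▸ hu'.2), hu'.1⟩
    have hcard : (Y.erase y).card ≤ (Y.filter (fun u => G.Adj y u)).card := by
      rw [Finset.card_erase_of_mem hy]
      have h1 := hnear y hy
      unfold nbrsIn at h1
      omega
    have heq : Y.filter (fun u => G.Adj y u) = Y.erase y :=
      Finset.eq_of_subset_of_card_le hfs hcard
    intro z hz hzy
    have hz' : z ∈ Y.erase y := Finset.mem_erase.2 ⟨hzy, hz⟩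
    rw [← heq] at hz'
    exact (Finset.mem_filter.1 hz').2
  -- every y in Y has exactly 2 neighbours outside Y
  have hYout2 : ∀ y ∈ Y, nbrsIn G Yᶜ y = 2 := by
    intro y hy
    have h1 := nbrsIn_add_compl (G := G) Y y
    have h2 := hYout y hy
    have h3 := hdeg y
    have h4 : nbrsIn G Y y ≤ m - 1 := nbrsIn_le_card_erase hy
    omega
  set X := Yᶜ.erase x with hX
  have hxYc : x ∈ Yᶜ := Finset.mem_compl.2 hxY
  have hXcard : X.card = d := by
    rw [hX, Finset.card_erase_of_mem hxYc]
    omega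
  have hXC1 : ∀ u ∈ X, u ∉ C1 := by
    intro u hu
    rw [hC1eq]
    have hu' := Finset.mem_erase.1 hu
    simp only [Finset.mem_insert]
    push_neg
    exact ⟨hu'.1, Finset.mem_compl.1 hu'.2⟩
  have hXYc : ∀ u ∈ X, u ∉ Y := fun u hu => Finset.mem_compl.1 (Finset.mem_erase.1 hu).2
  have hC1compl : C1ᶜ = X := by
    ext v
    rw [hC1eq, hX]
    simp only [Finset.mem_compl, Finset.mem_insert, Finset.mem_erase]
    tauto
  -- each u in X has exactly 2 neighbours in C1, and X is a clique
  have hXmain : ∀ u ∈ X, nbrsIn G Y u + (if G.Adj u x then 1 else 0) = 2 ∧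
      X.erase u ⊆ X.filter (fun w => G.Adj u w) := by
    intro u hu
    have huC1 : u ∉ C1 := hXC1 u hu
    have h2 : nbrsIn G C1 u ≤ 2 := closed_out_le_two hC1closed huC1
    have hins : nbrsIn G C1 u = nbrsIn G Y u + (if G.Adj u x then 1 else 0) := by
      rw [hC1eq]
      exact nbrsIn_insert Y x u hxY
    have hdc := nbrsIn_add_compl (G := G) C1 u
    have hXu : nbrsIn G C1ᶜ u ≤ d - 1 := by
      rw [hC1compl]
      have := nbrsIn_le_card_erase (G := G) (S := X) (v := u) hu
      omega
    have h3 := hdeg u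
    have hXge : d - 1 ≤ nbrsIn G C1ᶜ u := by omega
    refine ⟨by omega, ?_⟩
    have hfs : X.filter (fun w => G.Adj u w) ⊆ X.erase u := by
      intro w hw
      have hw' := Finset.mem_filter.1 hw
      exact Finset.mem_erase.2 ⟨fun h => G.irrefl (h ▸ hw'.2), hw'.1⟩
    have hcard : (X.erase u).card ≤ (X.filter (fun w => G.Adj u w)).card := by
      rw [Finset.card_erase_of_mem hu]
      have : nbrsIn G C1ᶜ u = (X.filter (fun w => G.Adj u w)).card := by
        rw [hC1compl]; rfl
      omega
    exact (Finset.eq_of_subset_of_card_le hfs hcard).ge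
  -- case split on the number of non-neighbours of x in X
  set Q := X.filter (fun u => ¬ G.Adj x u) with hQdef
  by_cases hQ2 : 2 ≤ Q.card
  · -- two vertices of X not adjacent to x : contradiction
    obtain ⟨u, hu, u', hu', huu'⟩ := Finset.one_lt_card.1 (by omega : 1 < Q.card)
    have huX : u ∈ X := (Finset.mem_filter.1 hu).1
    have hu'X : u' ∈ X := (Finset.mem_filter.1 hu').1
    have hux : ¬ G.Adj u x := fun h => (Finset.mem_filter.1 hu).2 (G.adj_symm h)
    have hu'x : ¬ G.Adj u' x := fun h => (Finset.mem_filter.1 hu').2 (G.adj_symm h)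
    have hu2 : nbrsIn G Y u = 2 := by
      have := (hXmain u huX).1
      simp [hux] at this
      omega
    have hu'2 : nbrsIn G Y u' = 2 := by
      have := (hXmain u' hu'X).1
      simp [hu'x] at this
      omega
    obtain ⟨T2, hT2card, huT2, hT2sub⟩ :=
      aux_fill hd15 hYlo (by omega) hnear (hXYc u huX) (by omega)
    set C2 := bootClosure G 3 T2 with hC2
    have hC2ne : C2 ≠ Finset.univ := hno T2 hT2card
    have hC2closed : BootClosed G 3 C2 := bootClosed_bootClosure T2
    have hC2le : C2.card + d ≤ n := by
      have h1 := compl_card_ge hC2closed hC2ne hδ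
      have h2 := Finset.card_compl (s := C2)
      have h3 := Finset.card_le_univ C2
      omega
    have hC2eq : C2 = insert u Y := by
      refine (Finset.eq_of_subset_of_card_le hT2sub ?_).symm
      rw [Finset.card_insert_of_notMem (hXYc u huX)]
      omega
    have hu'C2 : u' ∉ C2 := by
      rw [hC2eq]
      simp only [Finset.mem_insert]
      push_neg
      refine ⟨?_, hXYc u' hu'X⟩
      rintro rfl
      exact huu' rfl
    have hadj : G.Adj u' u := by
      have h := (hXmain u' hu'X).2
      have : u ∈ X.erase u' := Finset.mem_erase.2 ⟨huu', huX⟩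
      exact (Finset.mem_filter.1 (h this)).2
    have h3 : 3 ≤ nbrsIn G C2 u' := by
      rw [hC2eq, nbrsIn_insert Y u u' (hXYc u huX)]
      simp [hadj, hu'2]
    exact hu'C2 (hC2closed u' h3)
  · -- x adjacent to all but at most one vertex of X
    push_neg at hQ2
    have hQ1 : Q.card ≤ 1 := by omega
    set S := X.filter (fun u => G.Adj x u) with hSdef
    have hSQ : S.card + Q.card = d := by
      rw [hSdef, hQdef, Finset.card_filter_add_card_filter_not, hXcard]
    have hScard : d - 1 ≤ S.card := by omega
    -- every u in S has exactly one neighbour in Y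
    have hS1 : ∀ u ∈ S, nbrsIn G Y u = 1 := by
      intro u hu
      have huX : u ∈ X := (Finset.mem_filter.1 hu).1
      have hux : G.Adj u x := G.adj_symm (Finset.mem_filter.1 hu).2
      have := (hXmain u huX).1
      simp [hux] at this
      omega
    -- x has at least d-1 neighbours in Y
    have hYx : d - 1 ≤ nbrsIn G Y x := by
      have hsum : ∑ y ∈ Y, nbrsIn G Yᶜ y = 2 * d := by
        rw [Finset.sum_congr rfl (fun y hy => hYout2 y hy), Finset.sum_const, smul_eq_mul]
        omega
      rw [sum_nbrsIn_comm] at hsum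
      have hsplit : ∑ v ∈ Yᶜ, nbrsIn G Y v = nbrsIn G Y x + ∑ u ∈ X, nbrsIn G Y u := by
        rw [← Finset.insert_erase hxYc, Finset.sum_insert (Finset.notMem_erase x Yᶜ)]
      have hXsum : ∑ u ∈ X, nbrsIn G Y u + S.card = 2 * d := by
        have e1 : ∑ u ∈ X, (nbrsIn G Y u + (if G.Adj u x then 1 else 0)) = 2 * d := by
          rw [Finset.sum_congr rfl (fun u hu => (hXmain u hu).1), Finset.sum_const,
            smul_eq_mul, hXcard]
          omega
        have e2 : ∑ u ∈ X, (if G.Adj u x then 1 else 0) = S.card := by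
          rw [hSdef, Finset.card_filter]
          exact Finset.sum_congr rfl (fun u _ => by rw [G.adj_comm])
        rw [Finset.sum_add_distrib, e2] at e1
        exact e1
      omega
    -- there is u ∈ S with a neighbour w ∈ Y that is also a neighbour of x
    have hgood : ∃ u, u ∈ X ∧ G.Adj x u ∧ ∃ w, w ∈ Y ∧ G.Adj u w ∧ G.Adj x w := by
      by_contra hbad
      push_neg at hbad
      have hfc : (Y.filter (fun w => G.Adj x w)).card +
          (Y.filter (fun w => ¬ G.Adj x w)).card = Y.card := by
        simpa using Finset.card_filter_add_card_filter_not
          (s := Y) (p := fun w => G.Adj x w)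
      have hYx' : d - 1 ≤ (Y.filter (fun w => G.Adj x w)).card := hYx
      have hY0card : (Y.filter (fun w => ¬ G.Adj x w)).card ≤ 1 := by omega
      have hSY0 : ∀ u ∈ S, ∃ w, w ∈ Y.filter (fun w => ¬ G.Adj x w) ∧ G.Adj u w := by
        intro u hu
        have huX : u ∈ S := hu
        have h1 : (Y.filter (fun w => G.Adj u w)).card = 1 := hS1 u hu
        obtain ⟨w, hw⟩ := Finset.card_pos.1
          (show 0 < (Y.filter (fun w => G.Adj u w)).card by omega)
        have hw' := Finset.mem_filter.1 hw
        have hnadj : ¬ G.Adj x w :=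
          hbad u (Finset.mem_filter.1 hu).1 (Finset.mem_filter.1 hu).2 w hw'.1 hw'.2
        exact ⟨w, Finset.mem_filter.2 ⟨hw'.1, hnadj⟩, hw'.2⟩
      have hSne : S.Nonempty := Finset.card_pos.1 (by omega)
      obtain ⟨u0, hu0⟩ := hSne
      obtain ⟨y0, hy0, _⟩ := hSY0 u0 hu0
      have hsub : S ⊆ Yᶜ.filter (fun u => G.Adj y0 u) := by
        intro u hu
        obtain ⟨w, hw, hadj⟩ := hSY0 u hu
        have : w = y0 := Finset.card_le_one.1 hY0card w hw y0 hy0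
        refine Finset.mem_filter.2 ⟨(Finset.mem_erase.1 (Finset.mem_filter.1 hu).1).2, ?_⟩
        exact G.adj_symm (this ▸ hadj)
      have h2 : nbrsIn G Yᶜ y0 = 2 := hYout2 y0 (Finset.mem_filter.1 hy0).1
      have h3 : S.card ≤ nbrsIn G Yᶜ y0 := Finset.card_le_card hsub
      omega
    obtain ⟨u, huX, hxu, w, hwY, huw, hxw⟩ := hgood
    obtain ⟨y2, hy2⟩ : (Y.erase w).Nonempty := by
      rw [← Finset.card_pos, Finset.card_erase_of_mem hwY]
      omega
    have hy2Y : y2 ∈ Y := (Finset.mem_erase.1 hy2).2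
    have hy2w : y2 ≠ w := (Finset.mem_erase.1 hy2).1
    have hxu' : x ≠ u := fun h => ((Finset.mem_erase.1 huX).1 h.symm)
    have huY : u ∉ Y := hXYc u huX
    have hxy2 : x ≠ y2 := fun h => hxY (h ▸ hy2Y)
    have huy2 : u ≠ y2 := fun h => huY (h ▸ hy2Y)
    set T3 : Finset V := {x, u, y2} with hT3
    have hT3card : T3.card = 3 := by
      rw [hT3, Finset.card_insert_of_notMem (by
          simp only [Finset.mem_insert, Finset.mem_singleton]
          push_neg
          exact ⟨hxu', hxy2⟩),
        Finset.card_insert_of_notMem (by simpa using huy2), Finset.card_singleton]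
    set C3 := bootClosure G 3 T3 with hC3
    have hC3ne : C3 ≠ Finset.univ := hno T3 hT3card
    have hC3closed : BootClosed G 3 C3 := bootClosed_bootClosure T3
    have hT3sub : T3 ⊆ C3 := subset_bootClosure T3
    have hxC3 : x ∈ C3 := hT3sub (by simp [hT3])
    have huC3 : u ∈ C3 := hT3sub (by simp [hT3])
    have hy2C3 : y2 ∈ C3 := hT3sub (by simp [hT3])
    have hwC3 : w ∈ C3 := mem_closure_three hC3 hxC3 huC3 hy2C3 hxu' hxy2 huy2
      (G.adj_symm hxw) (G.adj_symm huw) (hYclq w hwY y2 hy2Y hy2w)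
    have hwx : w ≠ x := fun h => hxY (h ▸ hwY)
    have hwy2' : w ≠ y2 := fun h => hy2w h.symm
    -- all of Y belongs to C3
    set D := insert w (insert y2 (Y.filter (fun z => G.Adj x z))) with hD
    have hDY : D ⊆ Y := by
      intro z hz
      rcases Finset.mem_insert.1 hz with rfl | hz'
      · exact hwY
      rcases Finset.mem_insert.1 hz' with rfl | hz''
      · exact hy2Y
      · exact (Finset.mem_filter.1 hz'').1
    have hDC3 : D ⊆ C3 := by
      intro z hz
      rcases Finset.mem_insert.1 hz with rfl | hz'
      · exact hwC3
      rcases Finset.mem_insert.1 hz' with rfl | hz''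
      · exact hy2C3
      have hzY : z ∈ Y := (Finset.mem_filter.1 hz'').1
      have hzx : G.Adj x z := (Finset.mem_filter.1 hz'').2
      by_cases hzw : z = w
      · exact hzw ▸ hwC3
      by_cases hzy2 : z = y2
      · exact hzy2 ▸ hy2C3
      exact mem_closure_three hC3 hwC3 hy2C3 hxC3 hwy2' hwx hxy2.symm
        (hYclq z hzY w hwY (fun h => hzw h.symm)).symm.symm
        (hYclq z hzY y2 hy2Y (fun h => hzy2 h.symm))
        (G.adj_symm hzx)
    have hDcard : d - 1 ≤ D.card := by
      have h1 : (Y.filter (fun z => G.Adj x z)) ⊆ D := by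
        intro z hz
        exact Finset.mem_insert_of_mem (Finset.mem_insert_of_mem hz)
      have h2 := Finset.card_le_card h1
      have : (Y.filter (fun z => G.Adj x z)).card = nbrsIn G Y x := rfl
      omega
    have hYC3 : ∀ z ∈ Y, z ∈ C3 := by
      intro z hz
      by_cases hzD : z ∈ D
      · exact hDC3 hzD
      obtain ⟨a, ha, b, hb, c, hc, hab, hac, hbc⟩ :=
        Finset.two_lt_card.1 (by omega : 2 < D.card)
      have haz : a ≠ z := fun h => hzD (h ▸ ha)
      have hbz : b ≠ z := fun h => hzD (h ▸ hb)
      have hcz : c ≠ z := fun h => hzD (h ▸ hc)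
      exact hC3closed z (three_nbrs (hDC3 ha) (hDC3 hb) (hDC3 hc) hab hac hbc
        (hYclq z hz a (hDY ha) haz) (hYclq z hz b (hDY hb) hbz) (hYclq z hz c (hDY hc) hcz))
    have hfin : insert x (insert u Y) ⊆ C3 := by
      intro v hv
      rcases Finset.mem_insert.1 hv with rfl | hv'
      · exact hxC3
      rcases Finset.mem_insert.1 hv' with rfl | hv''
      · exact huC3
      · exact hYC3 v hv''
    have hfincard : (insert x (insert u Y)).card = d + 2 := by
      rw [Finset.card_insert_of_notMem (by
          simp only [Finset.mem_insert]
          push_neg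
          exact ⟨hxu', hxY⟩),
        Finset.card_insert_of_notMem huY]
      omega
    have hC3le : C3.card + d ≤ n := by
      have h1 := compl_card_ge hC3closed hC3ne hδ
      have h2 := Finset.card_compl (s := C3)
      have h3 := Finset.card_le_univ C3
      omega
    have := Finset.card_le_card hfin
    omega

end Aux4
section Aux5

variable {V : Type*} [Fintype V] {G : SimpleGraph V}

lemma aux_stepA {n d : ℕ} (hnV : Fintype.card V = n)
    (hd1 : 2 * d ≤ n) (hd2 : n ≤ 2 * d + 1) (hd15 : 15 ≤ d) (hδ : d + 1 ≤ G.minDegree) :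
    ∃ T : Finset V, T.card = 3 ∧ 5 ≤ (bootClosure G 3 T).card := by
  classical
  have hV : Nonempty V := by
    rw [← Fintype.card_pos_iff]
    omega
  obtain ⟨x⟩ := hV
  set Nx := G.neighborFinset x with hNx
  have hD : d + 1 ≤ Nx.card := by
    rw [hNx, G.card_neighborFinset_eq_degree]
    exact le_trans hδ (G.minDegree_le_degree x)
  have hxNx : x ∉ Nx := by
    rw [hNx, SimpleGraph.mem_neighborFinset]
    exact G.irrefl
  have hadjNx : ∀ a ∈ Nx, G.Adj x a := fun a ha => (SimpleGraph.mem_neighborFinset G x a).1 ha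
  by_cases hcase1 : ∃ y ∈ Nx, 2 ≤ nbrsIn G Nx y
  · obtain ⟨y, hy, hy2⟩ := hcase1
    obtain ⟨a, ha, b, hb, hab⟩ := Finset.one_lt_card.1
      (show 1 < (Nx.filter (fun u => G.Adj y u)).card from by unfold nbrsIn at hy2; omega)
    have haNx : a ∈ Nx := (Finset.mem_filter.1 ha).1
    have hbNx : b ∈ Nx := (Finset.mem_filter.1 hb).1
    have hya : G.Adj y a := (Finset.mem_filter.1 ha).2
    have hyb : G.Adj y b := (Finset.mem_filter.1 hb).2
    obtain ⟨c, hc⟩ : (Nx \ {a, b, y}).Nonempty := by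
      rw [← Finset.card_pos]
      have h1 : (Nx \ {a, b, y}).card + ({a, b, y} : Finset V).card ≥ Nx.card :=
        Finset.card_le_card_sdiff_add_card
      have h2 : ({a, b, y} : Finset V).card ≤ 3 := by
        refine le_trans (Finset.card_insert_le _ _) ?_
        refine Nat.succ_le_succ (le_trans (Finset.card_insert_le _ _) ?_)
        simp
      omega
    have hcNx : c ∈ Nx := (Finset.mem_sdiff.1 hc).1
    have hcne : c ≠ a ∧ c ≠ b ∧ c ≠ y := by
      have := (Finset.mem_sdiff.1 hc).2
      simp only [Finset.mem_insert, Finset.mem_singleton] at this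
      push_neg at this
      exact this
    refine ⟨{a, b, c}, ?_, ?_⟩
    · rw [Finset.card_insert_of_notMem (by
          simp only [Finset.mem_insert, Finset.mem_singleton]
          push_neg
          exact ⟨hab, fun h => hcne.1 h.symm⟩),
        Finset.card_insert_of_notMem (by simpa using fun h => hcne.2.1 h.symm),
        Finset.card_singleton]
    set C := bootClosure G 3 ({a, b, c} : Finset V) with hC
    have hsub : ({a, b, c} : Finset V) ⊆ C := subset_bootClosure _
    have haC : a ∈ C := hsub (by simp)
    have hbC : b ∈ C := hsub (by simp)
    have hcC : c ∈ C := hsub (by simp)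
    have hxC : x ∈ C := mem_closure_three hC haC hbC hcC hab (fun h => hcne.1 h.symm)
      (fun h => hcne.2.1 h.symm) (hadjNx a haNx) (hadjNx b hbNx) (hadjNx c hcNx)
    have hxa : x ≠ a := fun h => hxNx (h ▸ haNx)
    have hxb : x ≠ b := fun h => hxNx (h ▸ hbNx)
    have hyC : y ∈ C := mem_closure_three hC haC hbC hxC hab hxa.symm hxb.symm
      hya hyb (G.adj_symm (hadjNx y hy))
    have hfive : ({y, x, a, b, c} : Finset V) ⊆ C := by
      intro v hv
      simp only [Finset.mem_insert, Finset.mem_singleton] at hv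
      rcases hv with rfl | rfl | rfl | rfl | rfl <;> assumption
    have hxc : x ≠ c := fun h => hxNx (h ▸ hcNx)
    have hyx : y ≠ x := fun h => hxNx (h ▸ hy)
    have hya' : y ≠ a := G.ne_of_adj hya
    have hyb' : y ≠ b := G.ne_of_adj hyb
    have hcard5 : ({y, x, a, b, c} : Finset V).card = 5 := by
      rw [Finset.card_insert_of_notMem (by
          simp only [Finset.mem_insert, Finset.mem_singleton]
          push_neg
          exact ⟨hyx, hya', hyb', fun h => hcne.2.2 h.symm⟩),
        Finset.card_insert_of_notMem (by
          simp only [Finset.mem_insert, Finset.mem_singleton]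
          push_neg
          exact ⟨hxa, hxb, hxc⟩),
        Finset.card_insert_of_notMem (by
          simp only [Finset.mem_insert, Finset.mem_singleton]
          push_neg
          exact ⟨hab, fun h => hcne.1 h.symm⟩),
        Finset.card_insert_of_notMem (by simpa using fun h => hcne.2.1 h.symm),
        Finset.card_singleton]
    calc (5 : ℕ) = ({y, x, a, b, c} : Finset V).card := hcard5.symm
      _ ≤ C.card := Finset.card_le_card hfive
  by_cases hcase2 : ∃ z, z ∉ Nx ∧ z ≠ x ∧ 3 ≤ nbrsIn G Nx z
  · obtain ⟨z, hzNx, hzx, hz3⟩ := hcase2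
    obtain ⟨a, ha, b, hb, c, hc, hab, hac, hbc⟩ := Finset.two_lt_card.1
      (show 2 < (Nx.filter (fun u => G.Adj z u)).card from by unfold nbrsIn at hz3; omega)
    have haNx : a ∈ Nx := (Finset.mem_filter.1 ha).1
    have hbNx : b ∈ Nx := (Finset.mem_filter.1 hb).1
    have hcNx : c ∈ Nx := (Finset.mem_filter.1 hc).1
    have hza : G.Adj z a := (Finset.mem_filter.1 ha).2
    have hzb : G.Adj z b := (Finset.mem_filter.1 hb).2
    have hzc : G.Adj z c := (Finset.mem_filter.1 hc).2
    refine ⟨{a, b, c}, ?_, ?_⟩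
    · rw [Finset.card_insert_of_notMem (by
          simp only [Finset.mem_insert, Finset.mem_singleton]
          push_neg
          exact ⟨hab, hac⟩),
        Finset.card_insert_of_notMem (by simpa using hbc), Finset.card_singleton]
    set C := bootClosure G 3 ({a, b, c} : Finset V) with hC
    have hsub : ({a, b, c} : Finset V) ⊆ C := subset_bootClosure _
    have haC : a ∈ C := hsub (by simp)
    have hbC : b ∈ C := hsub (by simp)
    have hcC : c ∈ C := hsub (by simp)
    have hxC : x ∈ C := mem_closure_three hC haC hbC hcC hab hac hbc
      (hadjNx a haNx) (hadjNx b hbNx) (hadjNx c hcNx)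
    have hzC : z ∈ C := mem_closure_three hC haC hbC hcC hab hac hbc hza hzb hzc
    have hfive : ({z, x, a, b, c} : Finset V) ⊆ C := by
      intro v hv
      simp only [Finset.mem_insert, Finset.mem_singleton] at hv
      rcases hv with rfl | rfl | rfl | rfl | rfl <;> assumption
    have hxa : x ≠ a := fun h => hxNx (h ▸ haNx)
    have hxb : x ≠ b := fun h => hxNx (h ▸ hbNx)
    have hxc : x ≠ c := fun h => hxNx (h ▸ hcNx)
    have hza' : z ≠ a := fun h => hzNx (h ▸ haNx)
    have hzb' : z ≠ b := fun h => hzNx (h ▸ hbNx)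
    have hzc' : z ≠ c := fun h => hzNx (h ▸ hcNx)
    have hcard5 : ({z, x, a, b, c} : Finset V).card = 5 := by
      rw [Finset.card_insert_of_notMem (by
          simp only [Finset.mem_insert, Finset.mem_singleton]
          push_neg
          exact ⟨hzx, hza', hzb', hzc'⟩),
        Finset.card_insert_of_notMem (by
          simp only [Finset.mem_insert, Finset.mem_singleton]
          push_neg
          exact ⟨hxa, hxb, hxc⟩),
        Finset.card_insert_of_notMem (by
          simp only [Finset.mem_insert, Finset.mem_singleton]
          push_neg
          exact ⟨hab, hac⟩),
        Finset.card_insert_of_notMem (by simpa using hbc), Finset.card_singleton]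
    calc (5 : ℕ) = ({z, x, a, b, c} : Finset V).card := hcard5.symm
      _ ≤ C.card := Finset.card_le_card hfive
  -- counting contradiction
  exfalso
  push_neg at hcase1 hcase2
  have hcount : ∑ w ∈ Nx, G.degree w = ∑ v ∈ Finset.univ, nbrsIn G Nx v := by
    calc ∑ w ∈ Nx, G.degree w = ∑ w ∈ Nx, nbrsIn G Finset.univ w := by simp [nbrsIn_univ]
      _ = ∑ v ∈ Finset.univ, nbrsIn G Nx v := sum_nbrsIn_comm Nx Finset.univ
  have hNxsub : Nx ⊆ Finset.univ.erase x := by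
    intro w hw
    exact Finset.mem_erase.2 ⟨fun h => hxNx (h ▸ hw), Finset.mem_univ w⟩
  have hsplit : ∑ v ∈ Finset.univ, nbrsIn G Nx v =
      nbrsIn G Nx x + (∑ v ∈ (Finset.univ.erase x) \ Nx, nbrsIn G Nx v
        + ∑ v ∈ Nx, nbrsIn G Nx v) := by
    rw [← Finset.add_sum_erase _ _ (Finset.mem_univ x), ← Finset.sum_sdiff hNxsub]
  have hb1 : nbrsIn G Nx x ≤ Nx.card := nbrsIn_le_card Nx x
  have hb2 : ∑ v ∈ Nx, nbrsIn G Nx v ≤ Nx.card := by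
    calc ∑ v ∈ Nx, nbrsIn G Nx v ≤ ∑ _v ∈ Nx, 1 :=
          Finset.sum_le_sum (fun v hv => Nat.lt_succ_iff.mp (hcase1 v hv))
      _ = Nx.card := by simp
  have hb3 : ∑ v ∈ (Finset.univ.erase x) \ Nx, nbrsIn G Nx v ≤ 2 * (n - 1 - Nx.card) := by
    calc ∑ v ∈ (Finset.univ.erase x) \ Nx, nbrsIn G Nx v
        ≤ ∑ _v ∈ (Finset.univ.erase x) \ Nx, 2 := by
          refine Finset.sum_le_sum (fun v hv => ?_)
          have hv' := Finset.mem_sdiff.1 hv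
          exact Nat.lt_succ_iff.mp (hcase2 v hv'.2 (Finset.mem_erase.1 hv'.1).1)
      _ = 2 * (n - 1 - Nx.card) := by
          rw [Finset.sum_const, smul_eq_mul, Nat.mul_comm,
            Finset.card_sdiff_of_subset hNxsub, Finset.card_erase_of_mem (Finset.mem_univ x),
            Finset.card_univ, hnV]
  have hlow : Nx.card * (d + 1) ≤ ∑ w ∈ Nx, G.degree w := by
    calc Nx.card * (d + 1) = ∑ _w ∈ Nx, (d + 1) := by rw [Finset.sum_const, smul_eq_mul]
      _ ≤ ∑ w ∈ Nx, G.degree w :=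
          Finset.sum_le_sum (fun w _ => le_trans hδ (G.minDegree_le_degree w))
  have hDn : Nx.card ≤ n - 1 := by
    have := Finset.card_le_card hNxsub
    rw [Finset.card_erase_of_mem (Finset.mem_univ x), Finset.card_univ, hnV] at this
    exact this
  have hkey : Nx.card * (d + 1) ≤ 2 * n - 2 := by omega
  have hsq : (d + 1) * (d + 1) ≤ Nx.card * (d + 1) := Nat.mul_le_mul_right _ hD
  have : (d + 1) * (d + 1) ≤ 4 * d := by omega
  nlinarith

end Aux5

theorem stmt_12 {V : Type*} [Fintype V] (G : SimpleGraph V) (n : ℕ)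
    (hn : Fintype.card V = n) (h30 : 30 ≤ n) (hδ : n / 2 + 1 ≤ G.minDegree) :
    minPerc G 3 = 3 := by
  classical
  set d := n / 2 with hd
  have hd1 : 2 * d ≤ n := Nat.mul_div_le n 2 |>.trans_eq' (by rw [hd])
  have hd1' : 2 * d ≤ n := by omega
  have hd2 : n ≤ 2 * d + 1 := by omega
  have hd15 : 15 ≤ d := by omega
  have hδ' : d + 1 ≤ G.minDegree := hδ
  have hperc : ∃ T : Finset V, T.card = 3 ∧ bootClosure G 3 T = Finset.univ := by
    by_contra hno
    push_neg at hno
    obtain ⟨T0, hT0card, hT0cl⟩ := aux_stepA hn hd1' hd2 hd15 hδ'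
    set A := bootClosure G 3 T0 with hA
    have hAne : A ≠ Finset.univ := hno T0 hT0card
    have hAclosed : BootClosed G 3 A := bootClosed_bootClosure T0
    have hgap := closed_card_gap hAclosed hn hd1' hd2 hd15 hδ'
    have hAlo : d ≤ A.card := by omega
    have hAhi : A.card + d ≤ n := by
      have h1 := compl_card_ge hAclosed hAne hδ'
      have h2 := Finset.card_compl (s := A)
      have h3 := Finset.card_le_univ A
      omega
    have hYcard : Aᶜ.card = n - A.card := by rw [Finset.card_compl, hn]
    have hYout : ∀ y ∈ Aᶜ, nbrsIn G Aᶜᶜ y ≤ 2 := by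
      intro y hy
      rw [compl_compl]
      exact closed_out_le_two hAclosed (Finset.mem_compl.1 hy)
    obtain ⟨T, hTcard, hTuniv⟩ := aux_P hn hd1' hd2 hd15 hδ'
      (by omega : d ≤ Aᶜ.card) (by omega : Aᶜ.card + d ≤ n) hYout
    exact hno T hTcard hTuniv
  obtain ⟨T, hTcard, hTuniv⟩ := hperc
  have h3S : 3 ∈ {k | ∃ A : Finset V, A.card = k ∧ bootClosure G 3 A = Finset.univ} :=
    ⟨T, hTcard, hTuniv⟩
  have hle : minPerc G 3 ≤ 3 := Nat.sInf_le h3S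
  have hmem : minPerc G 3 ∈
      {k | ∃ A : Finset V, A.card = k ∧ bootClosure G 3 A = Finset.univ} :=
    Nat.sInf_mem ⟨3, h3S⟩
  obtain ⟨A, hAcard, hAuniv⟩ := hmem
  have hge : 3 ≤ minPerc G 3 := by
    by_contra hlt
    push_neg at hlt
    have hA2 : A.card ≤ 2 := by omega
    have hAclosed : BootClosed G 3 A := by
      intro v hv
      have := nbrsIn_le_card (G := G) A v
      omega
    have hsub : bootClosure G 3 A ⊆ A := bootClosure_subset subset_rfl hAclosed
    rw [hAuniv] at hsub
    have := Finset.card_le_card hsub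
    rw [Finset.card_univ, hn] at this
    omega
  omega
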